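/- arXiv:2605.24939 — 5 statements merged into one kernel-verified Lean document; each statement's English description precedes it below -/
import Mathlib

section
/- Let μ be a probability measure on A, W > 0, and let f, g be probability densities with respect to μ bounded above by 1/W and strictly positive μ-a.e. Suppose log f − log g = ⟨v, h(·)⟩ + c μ-a.e. for some vector v ∈ ℝᵖ, measurable h : A → ℝᵖ with ‖h(a)‖₂ ≤ 1 for all a, and constant c ∈ ℝ. Then KL(f·μ | g·μ) ≤ ‖v‖₂²/(2W). -/
open MeasureTheory
open scoped RealInnerProductSpace

lemma log_bregman {W x y : ℝ} (hW : 0 < W) (hx : 0 < x) (hxW : x ≤ 1 / W)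
    (hy : 0 < y) (hyW : y ≤ 1 / W) :
    (x - y) + W / 2 * (x - y) ^ 2 ≤ x * (Real.log x - Real.log y) := by
  set φ : ℝ → ℝ := fun t => x * Real.log x - x * Real.log t - (x - t) - W / 2 * (x - t) ^ 2
    with hφ
  have hder : ∀ t : ℝ, 0 < t → HasDerivAt φ (1 - x / t + W * (x - t)) t := by
    intro t ht
    have h1 : HasDerivAt (fun t : ℝ => x * Real.log t) (x * t⁻¹) t :=
      (Real.hasDerivAt_log ht.ne').const_mul x
    have h2 : HasDerivAt (fun t : ℝ => (x - t) ^ 2) (2 * (x - t) ^ 1 * (0 - 1)) t :=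
      ((hasDerivAt_const t x).sub (hasDerivAt_id t)).pow 2
    have h3 := (((hasDerivAt_const t (x * Real.log x)).sub h1).sub
        ((hasDerivAt_const t x).sub (hasDerivAt_id t))).sub (h2.const_mul (W / 2))
    convert h3 using 1
    · rfl
    · rfl
    · rfl
    rw [div_eq_mul_inv]
    ring
  have hphix : φ x = 0 := by simp [hφ]
  have key : 0 ≤ φ y := by
    rcases le_total y x with hyx | hxy
    · have hmono : AntitoneOn φ (Set.Icc y x) := by
        apply antitoneOn_of_deriv_nonpos (convex_Icc y x)
        · intro t ht
          exact ((hder t (lt_of_lt_of_le hy ht.1)).continuousAt).continuousWithinAt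
        · intro t ht
          rw [interior_Icc] at ht
          exact ((hder t (hy.trans ht.1)).differentiableAt).differentiableWithinAt
        · intro t ht
          rw [interior_Icc] at ht
          have ht0 : 0 < t := hy.trans ht.1
          rw [(hder t ht0).deriv]
          have htW : W * t < 1 := by
            have : t < 1 / W := lt_of_lt_of_le ht.2 hxW
            calc W * t < W * (1 / W) := by exact mul_lt_mul_of_pos_left this hW
            _ = 1 := by field_simp
          have hkey : t * (1 - x / t + W * (x - t)) = (x - t) * (W * t - 1) := by
            field_simp
            ring
          nlinarith [ht.2, ht0, hkey]
      have := hmono ⟨le_refl y, hyx⟩ ⟨hyx, le_refl x⟩ hyx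
      linarith [hphix ▸ this]
    · have hmono : MonotoneOn φ (Set.Icc x y) := by
        apply monotoneOn_of_deriv_nonneg (convex_Icc x y)
        · intro t ht
          exact ((hder t (lt_of_lt_of_le hx ht.1)).continuousAt).continuousWithinAt
        · intro t ht
          rw [interior_Icc] at ht
          exact ((hder t (hx.trans ht.1)).differentiableAt).differentiableWithinAt
        · intro t ht
          rw [interior_Icc] at ht
          have ht0 : 0 < t := hx.trans ht.1
          rw [(hder t ht0).deriv]
          have htW : W * t < 1 := by
            have : t < 1 / W := lt_of_lt_of_le ht.2 hyW
            calc W * t < W * (1 / W) := by exact mul_lt_mul_of_pos_left this hW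
            _ = 1 := by field_simp
          have hkey : t * (1 - x / t + W * (x - t)) = (x - t) * (W * t - 1) := by
            field_simp
            ring
          nlinarith [ht.1, ht0, hkey]
      have := hmono ⟨le_refl x, hxy⟩ ⟨hxy, le_refl y⟩ hxy
      linarith [hphix ▸ this]
  simp only [hφ] at key
  nlinarith [key]

/-- KL-logit inequality: if two bounded densities have log-ratio of log-linear form
`⟨v, h(·)⟩ + c` with `‖h‖ ≤ 1`, then `KL(f·μ | g·μ) ≤ ‖v‖² / (2W)`. -/
theorem kl_logit_bound {A : Type*} [MeasurableSpace A] (μ : Measure A)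
    [IsProbabilityMeasure μ] (W : ℝ) (hW : 0 < W) {p : ℕ}
    (f g : A → ℝ) (hf : Measurable f) (hg : Measurable g)
    (hfd : ∫ a, f a ∂μ = 1) (hgd : ∫ a, g a ∂μ = 1)
    (hfb : ∀ᵐ a ∂μ, 0 < f a ∧ f a ≤ 1 / W) (hgb : ∀ᵐ a ∂μ, 0 < g a ∧ g a ≤ 1 / W)
    (v : EuclideanSpace ℝ (Fin p)) (h : A → EuclideanSpace ℝ (Fin p)) (c : ℝ)
    (hh : ∀ a, ‖h a‖ ≤ 1)
    (hlog : ∀ᵐ a ∂μ, Real.log (f a) - Real.log (g a) = ⟪v, h a⟫ + c) :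
    ∫ a, f a * Real.log (f a / g a) ∂μ ≤ ‖v‖ ^ 2 / (2 * W) := by
  have hWi : (0:ℝ) < 1 / W := by positivity
  set φ : A → ℝ := fun a => Real.log (f a) - Real.log (g a) with hφdef
  have hφm : Measurable φ := (hf.log).sub (hg.log)
  set d : A → ℝ := fun a => f a - g a with hddef
  have hdm : Measurable d := hf.sub hg
  have hφb : ∀ᵐ a ∂μ, |φ a| ≤ ‖v‖ + |c| := by
    filter_upwards [hlog] with a ha
    rw [hφdef]; dsimp only
    rw [ha]
    calc |⟪v, h a⟫ + c| ≤ |⟪v, h a⟫| + |c| := abs_add_le _ _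
    _ ≤ ‖v‖ * ‖h a‖ + |c| := by gcongr; exact abs_real_inner_le_norm v (h a)
    _ ≤ ‖v‖ * 1 + |c| := by
        gcongr ?_ + |c|
        exact mul_le_mul_of_nonneg_left (hh a) (norm_nonneg v)
    _ = ‖v‖ + |c| := by ring
  have bdd_int : ∀ (u : A → ℝ), Measurable u → ∀ (C : ℝ), (∀ᵐ a ∂μ, |u a| ≤ C) →
      Integrable u μ := by
    intro u hu C hC
    exact (integrable_const C).mono' hu.aestronglyMeasurable
      (by filter_upwards [hC] with a ha; simpa using ha)
  have intf : Integrable f μ := bdd_int f hf (1/W)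
    (by filter_upwards [hfb] with a ha; rw [abs_of_pos ha.1]; exact ha.2)
  have intg : Integrable g μ := bdd_int g hg (1/W)
    (by filter_upwards [hgb] with a ha; rw [abs_of_pos ha.1]; exact ha.2)
  have hdb : ∀ᵐ a ∂μ, |d a| ≤ 1 / W := by
    filter_upwards [hfb, hgb] with a ha hb
    rw [hddef]; dsimp only
    rw [abs_le]; constructor <;> nlinarith [ha.1, ha.2, hb.1, hb.2]
  have intd : Integrable d μ := intf.sub intg
  have int_fφ : Integrable (fun a => f a * φ a) μ := by
    apply bdd_int _ (hf.mul hφm) ((1/W) * (‖v‖ + |c|))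
    filter_upwards [hfb, hφb] with a ha hb
    rw [Pi.mul_apply, abs_mul, abs_of_pos ha.1]
    exact mul_le_mul ha.2 hb (abs_nonneg _) (le_of_lt hWi)
  have int_gφ : Integrable (fun a => g a * φ a) μ := by
    apply bdd_int _ (hg.mul hφm) ((1/W) * (‖v‖ + |c|))
    filter_upwards [hgb, hφb] with a ha hb
    rw [Pi.mul_apply, abs_mul, abs_of_pos ha.1]
    exact mul_le_mul ha.2 hb (abs_nonneg _) (le_of_lt hWi)
  have int_dφ : Integrable (fun a => d a * φ a) μ := by
    have heq : (fun a => d a * φ a) = fun a => f a * φ a - g a * φ a := by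
      funext a; rw [hddef]; ring
    rw [heq]; exact int_fφ.sub int_gφ
  have int_dsq : Integrable (fun a => d a ^ 2) μ := by
    apply bdd_int _ (hdm.pow_const 2) ((1/W)^2)
    filter_upwards [hdb] with a ha
    rw [abs_pow]
    exact pow_le_pow_left₀ (abs_nonneg _) ha 2
  have int_absd : Integrable (fun a => |d a|) μ := intd.abs
  set Y : ℝ := ∫ a, |d a| ∂μ with hYdef
  set Q : ℝ := ∫ a, d a ^ 2 ∂μ with hQdef
  set S : ℝ := ∫ a, d a * φ a ∂μ with hSdef
  have hY0 : 0 ≤ Y := integral_nonneg fun a => abs_nonneg _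
  have hd0 : ∫ a, d a ∂μ = 0 := by
    rw [hddef]; dsimp only
    rw [integral_sub intf intg, hfd, hgd]; ring
  have hYQ : Y ^ 2 ≤ Q := by
    have hnn : 0 ≤ ∫ a, (|d a| - Y) ^ 2 ∂μ := integral_nonneg fun a => sq_nonneg _
    have i1 : Integrable (fun a => d a ^ 2 - 2 * Y * |d a|) μ :=
      int_dsq.sub (int_absd.const_mul (2 * Y))
    have hexp : ∫ a, (|d a| - Y) ^ 2 ∂μ = Q - Y ^ 2 := by
      have heq : (fun a => (|d a| - Y) ^ 2) = fun a => (d a ^ 2 - 2 * Y * |d a|) + Y ^ 2 := by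
        funext a; rw [sub_sq, sq_abs]; ring
      rw [heq, integral_add i1 (integrable_const _),
        integral_sub int_dsq (int_absd.const_mul (2 * Y)), integral_const_mul, integral_const]
      simp only [← hYdef, ← hQdef, measure_univ, ENNReal.toReal_one, probReal_univ, smul_eq_mul, one_mul]
      ring
    linarith [hexp ▸ hnn]
  have hS_le : S ≤ ‖v‖ * Y := by
    have i2 : Integrable (fun a => d a * φ a - c * d a) μ := int_dφ.sub (intd.const_mul c)
    have h1 : S = ∫ a, (d a * φ a - c * d a) ∂μ := by
      rw [integral_sub int_dφ (intd.const_mul c), integral_const_mul, hd0, hSdef]; ring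
    have h2 : ∫ a, ‖v‖ * |d a| ∂μ = ‖v‖ * Y := by
      rw [integral_const_mul, hYdef]
    rw [h1, ← h2]
    apply integral_mono_ae i2 (int_absd.const_mul ‖v‖)
    filter_upwards [hlog] with a ha
    have heq : d a * φ a - c * d a = d a * ⟪v, h a⟫ := by
      rw [hφdef]; dsimp only; rw [ha]; ring
    rw [heq]
    calc d a * ⟪v, h a⟫ ≤ |d a * ⟪v, h a⟫| := le_abs_self _
    _ = |d a| * |⟪v, h a⟫| := abs_mul _ _
    _ ≤ |d a| * (‖v‖ * ‖h a‖) := by gcongr; exact abs_real_inner_le_norm v (h a)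
    _ ≤ |d a| * (‖v‖ * 1) := by
        gcongr |d a| * ?_
        exact mul_le_mul_of_nonneg_left (hh a) (norm_nonneg v)
    _ = ‖v‖ * |d a| := by ring
  have hgφ_le : ∫ a, g a * φ a ∂μ ≤ -(W/2) * Q := by
    have i3 : Integrable (fun a => d a - W/2 * d a ^ 2) μ :=
      intd.sub (int_dsq.const_mul (W/2))
    have hmono : ∫ a, g a * φ a ∂μ ≤ ∫ a, (d a - W/2 * d a ^ 2) ∂μ := by
      apply integral_mono_ae int_gφ i3
      filter_upwards [hfb, hgb] with a ha hb
      have hbreg := log_bregman hW hb.1 hb.2 ha.1 ha.2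
      rw [hφdef, hddef]; dsimp only
      nlinarith [hbreg]
    calc ∫ a, g a * φ a ∂μ ≤ ∫ a, (d a - W/2 * d a ^ 2) ∂μ := hmono
    _ = -(W/2) * Q := by
        rw [integral_sub intd (int_dsq.const_mul (W/2)), hd0, integral_const_mul, hQdef]; ring
  have htarget : ∫ a, f a * Real.log (f a / g a) ∂μ = ∫ a, f a * φ a ∂μ := by
    apply integral_congr_ae
    filter_upwards [hfb, hgb] with a ha hb
    rw [hφdef]; dsimp only
    rw [Real.log_div ha.1.ne' hb.1.ne']
  have hsplit : ∫ a, f a * φ a ∂μ = S + ∫ a, g a * φ a ∂μ := by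
    rw [hSdef, ← integral_add int_dφ int_gφ]
    apply integral_congr_ae
    filter_upwards with a
    rw [hddef]; dsimp only; ring
  rw [htarget, hsplit]
  have chain : S + ∫ a, g a * φ a ∂μ ≤ ‖v‖ * Y - W/2 * Y^2 := by
    nlinarith [hS_le, hYQ, hW, hgφ_le]
  have final : ‖v‖ * Y - W/2 * Y^2 ≤ ‖v‖ ^ 2 / (2 * W) := by
    rw [le_div_iff₀ (by positivity : (0:ℝ) < 2 * W)]
    nlinarith [sq_nonneg (‖v‖ - W * Y), hW]
  linarith [chain, final]
end

section
/- Let A be a compact metric space, μ a probability measure with full support on A, and φ : A → ℝ continuous with maximizer set Argmax(φ) satisfying μ(Argmax(φ)) = 0. Then the Gibbs measures π_r(da) ∝ e^{r·φ(a)} μ(da) satisfy KL(π_r | μ) → ∞ as r → ∞. -/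
open MeasureTheory Filter Topology

private lemma mul_log_lb {f h : ℝ} (hf : 0 < f) (hh : 0 < h) :
    f * Real.log h + (f - h) ≤ f * Real.log f := by
  have h1 : Real.log (h / f) ≤ h / f - 1 := Real.log_le_sub_one_of_pos (div_pos hh hf)
  rw [Real.log_div hh.ne' hf.ne'] at h1
  have h2 : f * (Real.log h - Real.log f) ≤ f * (h / f - 1) :=
    mul_le_mul_of_nonneg_left h1 hf.le
  have h3 : f * (h / f - 1) = h - f := by field_simp
  rw [h3, mul_sub] at h2
  linarith

set_option maxHeartbeats 2000000 in
/-- If the maximizer set of a continuous `φ` has `μ`-measure zero (with `μ` a fully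
supported probability measure on a compact metric space), then the KL divergence of the
Gibbs measures `π_r ∝ e^{rφ} μ` from `μ` tends to infinity as `r → ∞`. -/
theorem gibbs_kl_tendsto_atTop {A : Type*} [MeasurableSpace A] [MetricSpace A]
    [CompactSpace A] [BorelSpace A] (μ : Measure A) [IsProbabilityMeasure μ]
    [μ.IsOpenPosMeasure] (φ : A → ℝ) (hφ : Continuous φ)
    (hmax : μ {a | ∀ b, φ b ≤ φ a} = 0) :
    Tendsto
      (fun r : ℝ => ∫ a, (Real.exp (r * φ a) / ∫ b, Real.exp (r * φ b) ∂μ) *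
          Real.log (Real.exp (r * φ a) / ∫ b, Real.exp (r * φ b) ∂μ) ∂μ)
      atTop atTop := by
  have hAne : Nonempty A := by
    by_contra h
    rw [not_nonempty_iff] at h
    have h1 := measure_univ (μ := μ)
    rw [Set.univ_eq_empty_iff.2 h] at h1
    simp at h1
  obtain ⟨a₀, -, ha₀⟩ := isCompact_univ.exists_isMaxOn Set.univ_nonempty hφ.continuousOn
  set M := φ a₀ with hMdef
  have hMa : ∀ b, φ b ≤ M := fun b => ha₀ (Set.mem_univ b)
  set T : ℕ → Set A := fun n => {a | M - 1/(n+1:ℝ) ≤ φ a} with hTdef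
  have hTclosed : ∀ n, IsClosed (T n) := fun n => isClosed_le continuous_const hφ
  have hTanti : Antitone T := by
    intro i j hij a ha
    simp only [hTdef, Set.mem_setOf_eq] at ha ⊢
    have h1 : (1:ℝ)/(j+1) ≤ 1/(i+1) := by
      apply one_div_le_one_div_of_le (by positivity)
      have : (i:ℝ) ≤ j := Nat.cast_le.2 hij
      linarith
    linarith
  have hInter : ⋂ n, T n = {a | ∀ b, φ b ≤ φ a} := by
    ext a
    simp only [hTdef, Set.mem_iInter, Set.mem_setOf_eq]
    constructor
    · intro h b
      refine le_trans (hMa b) ?_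
      by_contra hlt
      push_neg at hlt
      obtain ⟨n, hn⟩ := exists_nat_one_div_lt (sub_pos.2 hlt)
      have := h n
      linarith
    · intro h n
      have h1 : (0:ℝ) < 1/(n+1) := by positivity
      have := h a₀
      linarith
  have hT0 : Tendsto (fun n => μ (T n)) atTop (𝓝 0) := by
    have h := tendsto_measure_iInter_atTop (μ := μ)
      (fun n => (hTclosed n).measurableSet.nullMeasurableSet) hTanti ⟨0, measure_ne_top μ _⟩
    rw [hInter, hmax] at h
    exact h
  rw [tendsto_atTop]
  intro K
  set δ : ℝ := min (Real.exp (-(2*K+2))) (1/2) with hδdef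
  have hδpos : 0 < δ := lt_min (Real.exp_pos _) one_half_pos
  obtain ⟨N, hN⟩ : ∃ n, μ (T n) < ENNReal.ofReal δ :=
    (hT0.eventually (gt_mem_nhds (ENNReal.ofReal_pos.2 hδpos))).exists
  set S := T N with hSdef
  have hSmeas : MeasurableSet S := (hTclosed N).measurableSet
  set ε : ℝ := 1/(N+1:ℝ) with hεdef
  have hεpos : 0 < ε := by positivity
  have hSeq : S = {a | M - ε ≤ φ a} := rfl
  -- positivity of μ S
  have hU₀ : IsOpen {a | M - ε < φ a} := isOpen_lt continuous_const hφ
  have ha₀U₀ : a₀ ∈ {a | M - ε < φ a} := by simp only [Set.mem_setOf_eq]; linarith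
  have hμSpos : 0 < μ S := by
    refine lt_of_lt_of_le (hU₀.measure_pos μ ⟨a₀, ha₀U₀⟩) (measure_mono ?_)
    rw [hSeq]; intro x hx; simp only [Set.mem_setOf_eq] at *; linarith
  set m : ℝ := (μ S).toReal with hmdef
  have hm0 : 0 < m := ENNReal.toReal_pos hμSpos.ne' (measure_ne_top μ S)
  have hmδ : m < δ := by
    rw [hmdef]
    exact ((ENNReal.lt_ofReal_iff_toReal_lt (measure_ne_top μ S)).1 hN)
  have hm2 : m < 1/2 := lt_of_lt_of_le hmδ (min_le_right _ _)
  set c : ℝ := -Real.log m with hcdef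
  have hc : 2*K + 2 ≤ c := by
    have l1 : Real.log m < Real.log δ := Real.log_lt_log hm0 hmδ
    have l2 : Real.log δ ≤ -(2*K+2) := by
      calc Real.log δ ≤ Real.log (Real.exp (-(2*K+2))) :=
            Real.log_le_log hδpos (min_le_left _ _)
        _ = -(2*K+2) := Real.log_exp _
    rw [hcdef]; linarith
  have hcpos : 0 < c := by
    rw [hcdef]
    have := Real.log_neg hm0 (by linarith : m < 1)
    linarith
  have h2m : 0 < 2 - m := by linarith
  -- concentration neighborhood
  set U : Set A := {a | M - ε/2 < φ a} with hUdef
  have hUopen : IsOpen U := isOpen_lt continuous_const hφ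
  have ha₀U : a₀ ∈ U := by simp only [hUdef, Set.mem_setOf_eq]; linarith
  set p : ℝ := (μ U).toReal with hpdef
  have hp : 0 < p :=
    ENNReal.toReal_pos (hUopen.measure_pos μ ⟨a₀, ha₀U⟩).ne' (measure_ne_top μ U)
  filter_upwards [eventually_ge_atTop (max 0 (2/ε * Real.log (2/p)))] with r hr
  have hr0 : 0 ≤ r := le_trans (le_max_left _ _) hr
  have hr1 : 2/ε * Real.log (2/p) ≤ r := le_trans (le_max_right _ _) hr
  set Z : ℝ := ∫ b, Real.exp (r * φ b) ∂μ with hZdef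
  have hcexp : Continuous fun a => Real.exp (r * φ a) :=
    Real.continuous_exp.comp (continuous_const.mul hφ)
  have hiexp : Integrable (fun a => Real.exp (r * φ a)) μ := by
    have := hcexp.continuousOn.integrableOn_compact (μ := μ) (isCompact_univ (X := A))
    rwa [integrableOn_univ] at this
  have hUmeas : MeasurableSet U := hUopen.measurableSet
  have hZ1 : p * Real.exp (r * (M - ε/2)) ≤ Z := by
    have s1 : Real.exp (r * (M - ε/2)) * (μ U).toReal ≤ ∫ a in U, Real.exp (r * φ a) ∂μ := by
      apply setIntegral_ge_of_const_le_real hUmeas (measure_ne_top μ U)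
      · intro x hx
        simp only [hUdef, Set.mem_setOf_eq] at hx
        exact Real.exp_le_exp.2 (mul_le_mul_of_nonneg_left hx.le hr0)
      · exact hiexp.integrableOn
    have s2 : ∫ a in U, Real.exp (r * φ a) ∂μ ≤ Z :=
      setIntegral_le_integral hiexp (Filter.Eventually.of_forall fun a => (Real.exp_pos _).le)
    rw [hpdef]; linarith [s1, s2]
  have hZpos : 0 < Z := lt_of_lt_of_le (by positivity) hZ1
  set F : A → ℝ := fun a => Real.exp (r * φ a) / Z with hFdef
  have hFpos : ∀ a, 0 < F a := fun a => div_pos (Real.exp_pos _) hZpos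
  have hFcont : Continuous F := hcexp.div_const Z
  have hFint : Integrable F μ := hiexp.div_const Z
  have hFtot : ∫ a, F a ∂μ = 1 := by
    rw [hFdef]
    simp only
    rw [integral_div]
    exact div_self hZpos.ne'
  -- concentration: ∫ F over Sᶜ is small
  have hScF : ∫ a in Sᶜ, F a ∂μ ≤ 1/2 := by
    have e1 : ∫ a in Sᶜ, Real.exp (r * φ a) ∂μ ≤ Real.exp (r * (M - ε)) := by
      calc ∫ a in Sᶜ, Real.exp (r * φ a) ∂μ
          ≤ ∫ _ in Sᶜ, Real.exp (r * (M - ε)) ∂μ := by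
            apply setIntegral_mono_on hiexp.integrableOn (integrableOn_const ?_)
              hSmeas.compl
            · intro x hx
              rw [hSeq] at hx
              simp only [Set.mem_compl_iff, Set.mem_setOf_eq, not_le] at hx
              exact Real.exp_le_exp.2 (mul_le_mul_of_nonneg_left hx.le hr0)
            · exact (lt_of_le_of_lt (measure_mono (Set.subset_univ _)) (by simp)).ne
        _ = (μ Sᶜ).toReal * Real.exp (r * (M - ε)) := by rw [setIntegral_const, smul_eq_mul, measureReal_def]
        _ ≤ 1 * Real.exp (r * (M - ε)) := by
            apply mul_le_mul_of_nonneg_right _ (Real.exp_pos _).le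
            have := ENNReal.toReal_mono (by simp) (prob_le_one (μ := μ) (s := Sᶜ))
            simpa using this
        _ = Real.exp (r * (M - ε)) := one_mul _
    have key : Real.exp (-(r*ε/2)) ≤ p/2 := by
      have h2p : (0:ℝ) < 2/p := by positivity
      have l3 : Real.log (2/p) ≤ r * ε / 2 := by
        calc Real.log (2/p) = ε/2 * (2/ε * Real.log (2/p)) := by
              field_simp
            _ ≤ ε/2 * r := by
              apply mul_le_mul_of_nonneg_left hr1 (by positivity)
            _ = r * ε / 2 := by ring
      calc Real.exp (-(r*ε/2)) ≤ Real.exp (-(Real.log (2/p))) :=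
            Real.exp_le_exp.2 (by linarith)
        _ = p/2 := by rw [Real.exp_neg, Real.exp_log h2p, inv_div]
    have e2 : ∫ a in Sᶜ, F a ∂μ = (∫ a in Sᶜ, Real.exp (r * φ a) ∂μ) / Z := by
      rw [hFdef]; simp only; rw [integral_div]
    rw [e2]
    calc (∫ a in Sᶜ, Real.exp (r * φ a) ∂μ) / Z ≤ Real.exp (r * (M - ε)) / Z := by
          exact (div_le_div_iff_of_pos_right hZpos).2 e1
      _ ≤ Real.exp (r * (M - ε)) / (p * Real.exp (r * (M - ε/2))) := by
          gcongr
      _ = Real.exp (-(r*ε/2)) / p := by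
          rw [show r*(M-ε) = -(r*ε/2) + r*(M-ε/2) by ring, Real.exp_add]
          rw [mul_comm p (Real.exp (r*(M-ε/2)))]
          rw [mul_comm (Real.exp (-(r*ε/2))) (Real.exp (r*(M-ε/2)))]
          rw [mul_div_mul_left _ _ (Real.exp_ne_zero _)]
      _ ≤ (p/2) / p := by gcongr
      _ = 1/2 := by field_simp
  have hSF : 1/2 ≤ ∫ a in S, F a ∂μ := by
    have h := integral_add_compl hSmeas hFint
    rw [hFtot] at h
    linarith
  -- the Donsker–Varadhan style lower bound with g = c·1_S
  set w : ℝ := 1/(2-m) with hwdef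
  set q : ℝ := (1/m)/(2-m) - w with hqdef
  have hwpos : 0 < w := by rw [hwdef]; positivity
  have hHpos : 0 < (1/m)/(2-m) := by positivity
  set G : A → ℝ := fun a => Set.indicator S (fun _ => q) a + w with hGdef
  have hGint : Integrable G μ :=
    ((integrable_const q).indicator hSmeas).add (integrable_const w)
  have hGtot : ∫ a, G a ∂μ = 1 := by
    rw [hGdef]
    simp only
    rw [integral_add ((integrable_const q).indicator hSmeas) (integrable_const w),
      integral_indicator_const _ hSmeas, integral_const]
    simp only [measure_univ, ENNReal.toReal_one, one_smul, smul_eq_mul, measureReal_def, ← hmdef]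
    rw [hqdef, hwdef]
    field_simp
    ring
  -- pointwise inequality
  have hpt : ∀ a, Set.indicator S (fun x => c * F x) a - Real.log (2-m) * F a + (F a - G a)
      ≤ F a * Real.log (F a) := by
    intro a
    by_cases haS : a ∈ S
    · rw [hGdef]
      simp only [Set.indicator_of_mem haS]
      have hb := mul_log_lb (hFpos a) hHpos
      have hlog : Real.log ((1/m)/(2-m)) = c - Real.log (2-m) := by
        rw [Real.log_div (one_div_pos.2 hm0).ne' h2m.ne', one_div, Real.log_inv, hcdef]
      rw [hlog] at hb
      have hg : q + w = (1/m)/(2-m) := by rw [hqdef]; ring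
      have hexp : F a * (c - Real.log (2-m)) = c * F a - Real.log (2-m) * F a := by ring
      clear_value G F Z q w c m
      linarith [hb, hexp, hg]
    · rw [hGdef]
      simp only [Set.indicator_of_notMem haS]
      have hb := mul_log_lb (hFpos a) hwpos
      have hlog : Real.log w = - Real.log (2-m) := by
        rw [hwdef, one_div, Real.log_inv]
      rw [hlog] at hb
      have hexp : F a * (-Real.log (2-m)) = -(Real.log (2-m) * F a) := by ring
      clear_value G F Z q w c m
      linarith [hb, hexp]
  -- integrability of both sides
  have hlhs_int : Integrable
      (fun a => Set.indicator S (fun x => c * F x) a - Real.log (2-m) * F a + (F a - G a)) μ :=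
    (((hFint.const_mul c).indicator hSmeas).sub (hFint.const_mul _)).add (hFint.sub hGint)
  have hFlog_eq : (fun a => F a * Real.log (F a)) = fun a => F a * (r * φ a - Real.log Z) := by
    funext a
    rw [hFdef]
    simp only
    rw [Real.log_div (Real.exp_ne_zero _) hZpos.ne', Real.log_exp]
  have hrhs_int : Integrable (fun a => F a * Real.log (F a)) μ := by
    rw [hFlog_eq]
    have : Continuous fun a => F a * (r * φ a - Real.log Z) :=
      hFcont.mul ((continuous_const.mul hφ).sub continuous_const)
    have h2 := this.continuousOn.integrableOn_compact (μ := μ) (isCompact_univ (X := A))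
    rwa [integrableOn_univ] at h2
  have hmono := integral_mono hlhs_int hrhs_int hpt
  -- compute the left integral
  have hlhs_eq : ∫ a, (Set.indicator S (fun x => c * F x) a - Real.log (2-m) * F a
      + (F a - G a)) ∂μ = c * ∫ a in S, F a ∂μ - Real.log (2-m) := by
    have i1 : Integrable (fun a => Set.indicator S (fun x => c * F x) a
        - Real.log (2-m) * F a) μ :=
      ((hFint.const_mul c).indicator hSmeas).sub (hFint.const_mul _)
    have i2 : Integrable (fun a => F a - G a) μ := hFint.sub hGint
    have j1 : Integrable (fun a => Set.indicator S (fun x => c * F x) a) μ :=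
      (hFint.const_mul c).indicator hSmeas
    have j2 : Integrable (fun a => Real.log (2-m) * F a) μ := hFint.const_mul _
    rw [integral_add i1 i2, integral_sub j1 j2, integral_sub hFint hGint,
      integral_indicator hSmeas, integral_const_mul, integral_const_mul, hFtot, hGtot]
    ring
  rw [hlhs_eq] at hmono
  -- final arithmetic
  have hlog2 : Real.log (2-m) ≤ 1 := by
    calc Real.log (2-m) ≤ Real.log 2 := Real.log_le_log h2m (by linarith)
      _ ≤ 2 - 1 := Real.log_le_sub_one_of_pos (by norm_num)
      _ = 1 := by norm_num
  have harith : K ≤ c * ∫ a in S, F a ∂μ - Real.log (2-m) := by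
    have hmul : c * (1/2) ≤ c * ∫ a in S, F a ∂μ :=
      mul_le_mul_of_nonneg_left hSF hcpos.le
    clear_value F Z c m
    linarith
  exact le_trans harith hmono
end

section
/- Let B be a real symmetric p×p matrix and x ∈ ℝᵖ, and set M = B + x·xᵀ. If the eigenvalues of M are η₁ ≥ ... ≥ η_p and those of B are λ₁ ≥ ... ≥ λ_p, then they interlace: η₁ ≥ λ₁ ≥ η₂ ≥ λ₂ ≥ ... ≥ η_p ≥ λ_p. -/
open scoped Matrix RealInnerProductSpace
open Matrix Finset Submodule Module

variable {p : ℕ}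

/-- Coefficient of `w` on `b j` vanishes when `w` lies in the span of other basis vectors. -/
lemma ri_coeff_eq_zero (b : OrthonormalBasis (Fin p) ℝ (EuclideanSpace ℝ (Fin p)))
    (s : Finset (Fin p)) (w : EuclideanSpace ℝ (Fin p))
    (hw : w ∈ Submodule.span ℝ (b '' s)) {j : Fin p} (hj : j ∉ s) :
    ⟪b j, w⟫ = 0 := by
  have : w ∈ LinearMap.ker (innerSL ℝ (b j) : EuclideanSpace ℝ (Fin p) →L[ℝ] ℝ).toLinearMap := by
    apply Submodule.span_le.mpr _ hw
    rintro v ⟨k, hk, rfl⟩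
    simp only [Set.mem_setOf_eq, SetLike.mem_coe, LinearMap.mem_ker,
      ContinuousLinearMap.coe_coe, innerSL_apply_apply]
    exact b.orthonormal.2 (fun h => hj (h ▸ hk))
  simpa using this

lemma ri_key {A : Matrix (Fin p) (Fin p) ℝ} (hA : A.IsHermitian)
    (w : EuclideanSpace ℝ (Fin p)) (j : Fin p) :
    ⟪hA.eigenvectorBasis j, (WithLp.toLp 2 (A *ᵥ w) : EuclideanSpace ℝ (Fin p))⟫
      = hA.eigenvalues j * ⟪hA.eigenvectorBasis j, w⟫ := by
  have hsym := (Matrix.isHermitian_iff_isSymmetric.1 hA)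
  have h1 : (WithLp.toLp 2 (A *ᵥ w) : EuclideanSpace ℝ (Fin p)) = Matrix.toEuclideanLin A w := rfl
  rw [h1, ← hsym (hA.eigenvectorBasis j) w]
  have h2 : Matrix.toEuclideanLin A (hA.eigenvectorBasis j)
      = hA.eigenvalues j • hA.eigenvectorBasis j := by
    ext k
    exact congrFun (hA.mulVec_eigenvectorBasis j) k
  rw [h2, real_inner_smul_left]

lemma ri_quad_expansion {A : Matrix (Fin p) (Fin p) ℝ} (hA : A.IsHermitian)
    (w : EuclideanSpace ℝ (Fin p)) :
    ⟪w, (WithLp.toLp 2 (A *ᵥ w) : EuclideanSpace ℝ (Fin p))⟫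
      = ∑ j, hA.eigenvalues j * ⟪hA.eigenvectorBasis j, w⟫ ^ 2 := by
  set b := hA.eigenvectorBasis with hb
  rw [← b.repr.inner_map_map w (WithLp.toLp 2 (A *ᵥ w) : EuclideanSpace ℝ (Fin p))]
  rw [PiLp.inner_apply]
  congr 1; ext j
  rw [show b.repr w j = ⟪b j, w⟫ from b.repr_apply_apply w j,
      show b.repr (WithLp.toLp 2 (A *ᵥ w) : EuclideanSpace ℝ (Fin p)) j = _ from
        b.repr_apply_apply (WithLp.toLp 2 (A *ᵥ w) : EuclideanSpace ℝ (Fin p)) j,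
      ri_key hA w j]
  simp [RCLike.inner_apply]
  ring

lemma ri_norm_expansion (b : OrthonormalBasis (Fin p) ℝ (EuclideanSpace ℝ (Fin p)))
    (w : EuclideanSpace ℝ (Fin p)) :
    ‖w‖ ^ 2 = ∑ j, ⟪b j, w⟫ ^ 2 := by
  rw [← real_inner_self_eq_norm_sq, ← b.repr.inner_map_map w w, PiLp.inner_apply]
  congr 1; ext j
  rw [b.repr_apply_apply w j]
  simp [RCLike.inner_apply]

lemma ri_quad_le {A : Matrix (Fin p) (Fin p) ℝ} (hA : A.IsHermitian)
    (s : Finset (Fin p)) (c : ℝ) (hc : ∀ j ∈ s, hA.eigenvalues j ≤ c)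
    (w : EuclideanSpace ℝ (Fin p))
    (hw : w ∈ Submodule.span ℝ (hA.eigenvectorBasis '' s)) :
    ⟪w, (WithLp.toLp 2 (A *ᵥ w) : EuclideanSpace ℝ (Fin p))⟫ ≤ c * ‖w‖ ^ 2 := by
  rw [ri_quad_expansion hA w, ri_norm_expansion hA.eigenvectorBasis w, Finset.mul_sum]
  apply Finset.sum_le_sum
  intro j _
  by_cases hj : j ∈ s
  · exact mul_le_mul_of_nonneg_right (hc j hj) (sq_nonneg _)
  · rw [ri_coeff_eq_zero hA.eigenvectorBasis s w hw hj]
    simp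

lemma ri_quad_ge {A : Matrix (Fin p) (Fin p) ℝ} (hA : A.IsHermitian)
    (s : Finset (Fin p)) (c : ℝ) (hc : ∀ j ∈ s, c ≤ hA.eigenvalues j)
    (w : EuclideanSpace ℝ (Fin p))
    (hw : w ∈ Submodule.span ℝ (hA.eigenvectorBasis '' s)) :
    c * ‖w‖ ^ 2 ≤ ⟪w, (WithLp.toLp 2 (A *ᵥ w) : EuclideanSpace ℝ (Fin p))⟫ := by
  rw [ri_quad_expansion hA w, ri_norm_expansion hA.eigenvectorBasis w, Finset.mul_sum]
  apply Finset.sum_le_sum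
  intro j _
  by_cases hj : j ∈ s
  · exact mul_le_mul_of_nonneg_right (hc j hj) (sq_nonneg _)
  · rw [ri_coeff_eq_zero hA.eigenvectorBasis s w hw hj]
    simp

lemma ri_finrank_span (b : OrthonormalBasis (Fin p) ℝ (EuclideanSpace ℝ (Fin p)))
    (s : Finset (Fin p)) :
    finrank ℝ (Submodule.span ℝ (b '' s) : Submodule ℝ (EuclideanSpace ℝ (Fin p))) = s.card := by
  have hinj : Function.Injective b := b.toBasis.injective
  classical
  have h1 : (b '' s : Set (EuclideanSpace ℝ (Fin p))) = ↑(s.image b) := by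
    simp [Finset.coe_image]
  rw [h1, finrank_span_finset_eq_card, Finset.card_image_of_injective _ hinj]
  refine ((linearIndepOn_id_range_iff hinj).mpr b.orthonormal.linearIndependent).mono ?_
  intro v hv
  obtain ⟨k, _, rfl⟩ := Finset.mem_image.mp hv
  exact Set.mem_range_self k

lemma ri_finrank_inf (S T : Submodule ℝ (EuclideanSpace ℝ (Fin p))) :
    finrank ℝ S + finrank ℝ T - p ≤ finrank ℝ (S ⊓ T : Submodule ℝ (EuclideanSpace ℝ (Fin p))) := by
  have h1 := Submodule.finrank_sup_add_finrank_inf_eq S T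
  have h2 : finrank ℝ (S ⊔ T : Submodule ℝ (EuclideanSpace ℝ (Fin p))) ≤ p := by
    simpa [finrank_euclideanSpace] using Submodule.finrank_le (S ⊔ T)
  omega

lemma ri_exists_ne_zero (V : Submodule ℝ (EuclideanSpace ℝ (Fin p)))
    (h : 0 < finrank ℝ V) : ∃ w, w ∈ V ∧ w ≠ 0 := by
  haveI := Module.finrank_pos_iff (R := ℝ) (M := V) |>.mp h
  obtain ⟨v, hv⟩ := exists_ne (0 : V)
  exact ⟨(v : EuclideanSpace ℝ (Fin p)), v.2, fun h0 => hv (Subtype.ext h0)⟩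

lemma ri_inner_eq_dot (v w : EuclideanSpace ℝ (Fin p)) :
    ⟪v, w⟫ = (v : Fin p → ℝ) ⬝ᵥ (w : Fin p → ℝ) := by
  simp [PiLp.inner_apply, dotProduct, RCLike.inner_apply, mul_comm]

lemma ri_rank_one (x : Fin p → ℝ) (w : Fin p → ℝ) :
    Matrix.vecMulVec x x *ᵥ w = (x ⬝ᵥ w) • x := by
  ext k
  simp [Matrix.mulVec, Matrix.vecMulVec_apply, dotProduct, Finset.mul_sum, mul_comm,
    mul_left_comm]

/-- Rank-one eigenvalue interlacing: if `M = B + x xᵀ` with `B` real symmetric and the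
eigenvalues of `M` and `B` are enumerated in decreasing order as `η` and `lam`, then
`η₁ ≥ λ₁ ≥ η₂ ≥ λ₂ ≥ ⋯ ≥ η_p ≥ λ_p`. -/
theorem rank_one_interlacing {p : ℕ} (B : Matrix (Fin p) (Fin p) ℝ) (hB : B.IsHermitian)
    (x : Fin p → ℝ) (M : Matrix (Fin p) (Fin p) ℝ) (hMdef : M = B + Matrix.vecMulVec x x)
    (hM : M.IsHermitian) (η lam : Fin p → ℝ) (hηmono : Antitone η) (hlmono : Antitone lam)
    (ση σl : Equiv.Perm (Fin p))
    (hη : ∀ i, η i = hM.eigenvalues (ση i)) (hl : ∀ i, lam i = hB.eigenvalues (σl i)) :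
    (∀ i, lam i ≤ η i) ∧ ∀ i : Fin p, ∀ h : (i : ℕ) + 1 < p, η ⟨(i : ℕ) + 1, h⟩ ≤ lam i := by
  classical
  have hkey : ∀ w : EuclideanSpace ℝ (Fin p),
      (w : Fin p → ℝ) ⬝ᵥ (M *ᵥ (w : Fin p → ℝ))
        = (w : Fin p → ℝ) ⬝ᵥ (B *ᵥ (w : Fin p → ℝ)) + (x ⬝ᵥ (w : Fin p → ℝ)) ^ 2 := by
    intro w
    rw [hMdef, Matrix.add_mulVec, dotProduct_add, ri_rank_one, dotProduct_smul,
      dotProduct_comm (w : Fin p → ℝ) x]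
    ring_nf
  constructor
  · intro i
    set S : Submodule ℝ (EuclideanSpace ℝ (Fin p)) :=
      Submodule.span ℝ (hB.eigenvectorBasis '' ((Iic i).image σl)) with hSdef
    set T : Submodule ℝ (EuclideanSpace ℝ (Fin p)) :=
      Submodule.span ℝ (hM.eigenvectorBasis '' ((Ici i).image ση)) with hTdef
    have hS : finrank ℝ S = (i : ℕ) + 1 := by
      rw [hSdef, ri_finrank_span, Finset.card_image_of_injective _ σl.injective, Fin.card_Iic]
    have hT : finrank ℝ T = p - (i : ℕ) := by
      rw [hTdef, ri_finrank_span, Finset.card_image_of_injective _ ση.injective, Fin.card_Ici]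
    have hip := i.isLt
    have hpos : 0 < finrank ℝ (S ⊓ T : Submodule ℝ (EuclideanSpace ℝ (Fin p))) := by
      have := ri_finrank_inf S T; omega
    obtain ⟨w, hw, hw0⟩ := ri_exists_ne_zero _ hpos
    have h1 : lam i * ‖w‖ ^ 2 ≤ ⟪w, (WithLp.toLp 2 (B *ᵥ w) : EuclideanSpace ℝ (Fin p))⟫ := by
      refine ri_quad_ge hB _ (lam i) ?_ w hw.1
      intro j hj
      obtain ⟨k, hk, rfl⟩ := Finset.mem_image.mp hj
      rw [← hl k]; exact hlmono (Finset.mem_Iic.mp hk)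
    have h2 : ⟪w, (WithLp.toLp 2 (M *ᵥ w) : EuclideanSpace ℝ (Fin p))⟫ ≤ η i * ‖w‖ ^ 2 := by
      refine ri_quad_le hM _ (η i) ?_ w hw.2
      intro j hj
      obtain ⟨k, hk, rfl⟩ := Finset.mem_image.mp hj
      rw [← hη k]; exact hηmono (Finset.mem_Ici.mp hk)
    have h3 : ⟪w, (WithLp.toLp 2 (B *ᵥ w) : EuclideanSpace ℝ (Fin p))⟫
        ≤ ⟪w, (WithLp.toLp 2 (M *ᵥ w) : EuclideanSpace ℝ (Fin p))⟫ := by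
      rw [ri_inner_eq_dot, ri_inner_eq_dot, hkey w]
      nlinarith [sq_nonneg (x ⬝ᵥ (w : Fin p → ℝ))]
    have hn : 0 < ‖w‖ ^ 2 := pow_pos (norm_pos_iff.mpr hw0) 2
    exact le_of_mul_le_mul_right (by linarith) hn
  · intro i h
    have hlt : (i : ℕ) + 1 < p := h
    set i' : Fin p := ⟨(i : ℕ) + 1, h⟩ with hi'
    have hii' : (i' : ℕ) = (i : ℕ) + 1 := rfl
    set S : Submodule ℝ (EuclideanSpace ℝ (Fin p)) :=
      Submodule.span ℝ (hM.eigenvectorBasis '' ((Iic i').image ση)) with hSdef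
    set T : Submodule ℝ (EuclideanSpace ℝ (Fin p)) :=
      Submodule.span ℝ (hB.eigenvectorBasis '' ((Ici i).image σl)) with hTdef
    set f : EuclideanSpace ℝ (Fin p) →ₗ[ℝ] ℝ :=
      (innerSL ℝ (show EuclideanSpace ℝ (Fin p) from WithLp.toLp 2 x)).toLinearMap with hfdef
    have hS : finrank ℝ S = (i : ℕ) + 2 := by
      rw [hSdef, ri_finrank_span, Finset.card_image_of_injective _ ση.injective, Fin.card_Iic,
        hii']
    have hT : finrank ℝ T = p - (i : ℕ) := by
      rw [hTdef, ri_finrank_span, Finset.card_image_of_injective _ σl.injective, Fin.card_Ici]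
    have hK : p - 1 ≤ finrank ℝ (LinearMap.ker f) := by
      have h1 := LinearMap.finrank_range_add_finrank_ker f
      have h2 : finrank ℝ (LinearMap.range f) ≤ 1 := by
        simpa using Submodule.finrank_le (LinearMap.range f)
      have h3 : finrank ℝ (EuclideanSpace ℝ (Fin p)) = p := by simp
      omega
    have hip := i.isLt
    have hSK : (i : ℕ) + 1 ≤
        finrank ℝ (S ⊓ LinearMap.ker f : Submodule ℝ (EuclideanSpace ℝ (Fin p))) := by
      have := ri_finrank_inf S (LinearMap.ker f); omega
    have hpos : 0 < finrank ℝ ((S ⊓ LinearMap.ker f) ⊓ T :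
        Submodule ℝ (EuclideanSpace ℝ (Fin p))) := by
      have := ri_finrank_inf (S ⊓ LinearMap.ker f) T; omega
    obtain ⟨w, hw, hw0⟩ := ri_exists_ne_zero _ hpos
    have hwS : w ∈ S := hw.1.1
    have hwK : w ∈ LinearMap.ker f := hw.1.2
    have hwT : w ∈ T := hw.2
    have hx0 : x ⬝ᵥ (w : Fin p → ℝ) = 0 := by
      have := LinearMap.mem_ker.mp hwK
      rw [← ri_inner_eq_dot (show EuclideanSpace ℝ (Fin p) from WithLp.toLp 2 x) w]
      simpa [hfdef] using this
    have h1 : η i' * ‖w‖ ^ 2 ≤ ⟪w, (WithLp.toLp 2 (M *ᵥ w) : EuclideanSpace ℝ (Fin p))⟫ := by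
      refine ri_quad_ge hM _ (η i') ?_ w hwS
      intro j hj
      obtain ⟨k, hk, rfl⟩ := Finset.mem_image.mp hj
      rw [← hη k]; exact hηmono (Finset.mem_Iic.mp hk)
    have h2 : ⟪w, (WithLp.toLp 2 (B *ᵥ w) : EuclideanSpace ℝ (Fin p))⟫ ≤ lam i * ‖w‖ ^ 2 := by
      refine ri_quad_le hB _ (lam i) ?_ w hwT
      intro j hj
      obtain ⟨k, hk, rfl⟩ := Finset.mem_image.mp hj
      rw [← hl k]; exact hlmono (Finset.mem_Ici.mp hk)
    have h3 : ⟪w, (WithLp.toLp 2 (M *ᵥ w) : EuclideanSpace ℝ (Fin p))⟫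
        = ⟪w, (WithLp.toLp 2 (B *ᵥ w) : EuclideanSpace ℝ (Fin p))⟫ := by
      rw [ri_inner_eq_dot, ri_inner_eq_dot, hkey w, hx0]
      ring
    have hn : 0 < ‖w‖ ^ 2 := pow_pos (norm_pos_iff.mpr hw0) 2
    exact le_of_mul_le_mul_right (by linarith) hn
end

section
/- Let μ be a probability measure on A, π_θ ∝ exp(⟨θ, g⟩)μ with sup_a ‖g(a)‖₂ ≤ 1, and θ' ∈ ℝᵖ. Suppose π is a probability measure with density dπ/dμ satisfying e^{−R} ≤ dπ/dμ(a) for all a, for some R > 0. Then π = q·π_{θ'} + (1 − q)·π̄ for q = e^{−R − 2‖θ'‖₂} ∈ (0, 1] and some probability measure π̄, and consequently for every unit vector v: Var_{π}(⟨v, g⟩) ≥ q·Var_{π_{θ'}}(⟨v, g⟩). -/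
open MeasureTheory ProbabilityTheory
open scoped RealInnerProductSpace

private lemma aux_var_le {Ω : Type*} [MeasurableSpace Ω] (ν : Measure Ω) [IsProbabilityMeasure ν]
    (X : Ω → ℝ) (hX : MemLp X 2 ν) (m : ℝ) : variance X ν ≤ ∫ a, (X a - m)^2 ∂ν := by
  rw [variance_eq_sub hX]
  have h1 : Integrable (fun a => X a ^ 2) ν := by simpa using hX.integrable_sq
  have h2 : Integrable X ν := hX.integrable one_le_two
  have hrw : ∫ a, (X a - m)^2 ∂ν = ∫ a, (X a^2 - 2*m*X a + m^2) ∂ν := by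
    congr 1; funext a; ring
  have h3 : Integrable (fun a => X a^2 - 2*m*X a) ν := h1.sub (h2.const_mul (2*m))
  have h4 : Integrable (fun a => 2*m*X a) ν := h2.const_mul (2*m)
  rw [hrw, integral_add h3 (integrable_const _),
    integral_sub h1 h4, integral_const_mul, integral_const]
  simp only [measure_univ, probReal_univ, ENNReal.toReal_one, smul_eq_mul, one_mul, Pi.pow_apply]
  nlinarith [sq_nonneg (∫ a, X a ∂ν - m)]

/-- If `π = f·μ` with `f ≥ e^{−R}` and `π_{θ'} ∝ e^{⟨θ',g⟩} μ` with `‖g‖ ≤ 1`, then `π`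
is a mixture `π = q·π_{θ'} + (1−q)·π̄` with `q = e^{−R−2‖θ'‖} ∈ (0,1]`, and for every unit
vector `v`, `Var_π(⟨v,g⟩) ≥ q·Var_{π_{θ'}}(⟨v,g⟩)`. -/
theorem density_lower_bound_mixture {A : Type*} [MeasurableSpace A] {p : ℕ}
    (μ : Measure A) [IsProbabilityMeasure μ]
    (g : A → EuclideanSpace ℝ (Fin p)) (hgm : Measurable g) (hgb : ∀ a, ‖g a‖ ≤ 1)
    (θ' : EuclideanSpace ℝ (Fin p)) (πθ' : Measure A)
    (hπθ' : πθ' = μ.withDensity fun a =>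
        ENNReal.ofReal (Real.exp ⟪θ', g a⟫ / ∫ b, Real.exp ⟪θ', g b⟫ ∂μ))
    (R : ℝ) (hR : 0 < R) (f : A → ℝ) (hfm : Measurable f)
    (π : Measure A) [IsProbabilityMeasure π]
    (hπ : π = μ.withDensity fun a => ENNReal.ofReal (f a))
    (hfl : ∀ a, Real.exp (-R) ≤ f a) :
    0 < Real.exp (-R - 2 * ‖θ'‖) ∧ Real.exp (-R - 2 * ‖θ'‖) ≤ 1 ∧
      ∃ πbar : Measure A, IsProbabilityMeasure πbar ∧
        π = ENNReal.ofReal (Real.exp (-R - 2 * ‖θ'‖)) • πθ'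
            + ENNReal.ofReal (1 - Real.exp (-R - 2 * ‖θ'‖)) • πbar ∧
        ∀ v : EuclideanSpace ℝ (Fin p), ‖v‖ = 1 →
          Real.exp (-R - 2 * ‖θ'‖) * variance (fun a => ⟪v, g a⟫) πθ'
            ≤ variance (fun a => ⟪v, g a⟫) π := by
  set q : ℝ := Real.exp (-R - 2 * ‖θ'‖) with hq
  set Z : ℝ := ∫ b, Real.exp ⟪θ', g b⟫ ∂μ with hZ
  set h : A → ℝ := fun a => Real.exp ⟪θ', g a⟫ / Z with hh
  have hqpos : 0 < q := Real.exp_pos _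
  have hq1 : q < 1 := by
    exact Real.exp_lt_one_iff.2 (by nlinarith [norm_nonneg θ'])
  have hiple : ∀ a, |⟪θ', g a⟫| ≤ ‖θ'‖ := fun a =>
    (abs_real_inner_le_norm θ' (g a)).trans
      (mul_le_of_le_one_right (norm_nonneg _) (hgb a))
  have hinnm : Measurable fun a => ⟪θ', g a⟫ := measurable_const.inner hgm
  have hexpm : Measurable fun a => Real.exp ⟪θ', g a⟫ := hinnm.exp
  have hexpint : Integrable (fun a => Real.exp ⟪θ', g a⟫) μ := by
    refine ⟨hexpm.aestronglyMeasurable, ?_⟩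
    apply HasFiniteIntegral.of_bounded (C := Real.exp ‖θ'‖)
    filter_upwards with a
    rw [Real.norm_eq_abs, abs_of_pos (Real.exp_pos _)]
    exact Real.exp_le_exp.2 ((le_abs_self _).trans (hiple a))
  have hZge : Real.exp (-‖θ'‖) ≤ Z := by
    have := integral_mono (integrable_const (Real.exp (-‖θ'‖))) hexpint
      (fun a => Real.exp_le_exp.2 (neg_le_of_abs_le (hiple a)))
    simpa using this
  have hZpos : 0 < Z := lt_of_lt_of_le (Real.exp_pos _) hZge
  have hmeash : Measurable h := hexpm.div_const Z
  have hinth : Integrable h μ := hexpint.div_const Z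
  have hh0 : ∀ a, 0 ≤ h a := fun a => div_nonneg (Real.exp_pos _).le hZpos.le
  have hinth1 : ∫ a, h a ∂μ = 1 := by
    rw [hh]; rw [integral_div]; exact div_self hZpos.ne'
  have hhle : ∀ a, h a ≤ Real.exp (2 * ‖θ'‖) := by
    intro a
    have h1 : Real.exp ⟪θ', g a⟫ ≤ Real.exp ‖θ'‖ :=
      Real.exp_le_exp.2 ((le_abs_self _).trans (hiple a))
    calc h a ≤ Real.exp ‖θ'‖ / Real.exp (-‖θ'‖) :=
          div_le_div₀ (Real.exp_pos _).le h1 (Real.exp_pos _) hZge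
      _ = Real.exp (2 * ‖θ'‖) := by rw [← Real.exp_sub]; ring_nf
  have hqh : ∀ a, q * h a ≤ f a := by
    intro a
    calc q * h a ≤ q * Real.exp (2 * ‖θ'‖) :=
          mul_le_mul_of_nonneg_left (hhle a) hqpos.le
      _ = Real.exp (-R) := by rw [hq, ← Real.exp_add]; ring_nf
      _ ≤ f a := hfl a
  have hf0 : ∀ a, 0 ≤ f a := fun a => le_trans (Real.exp_pos _).le (hfl a)
  -- πθ' is a probability measure
  have hlinth : ∫⁻ a, ENNReal.ofReal (h a) ∂μ = 1 := by
    rw [← ofReal_integral_eq_lintegral_ofReal hinth (Filter.Eventually.of_forall hh0),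
      hinth1, ENNReal.ofReal_one]
  haveI hprobθ : IsProbabilityMeasure πθ' := by
    constructor
    rw [hπθ', withDensity_apply _ MeasurableSet.univ, setLIntegral_univ]
    exact hlinth
  -- f is integrable with integral 1
  have hlintf : ∫⁻ a, ENNReal.ofReal (f a) ∂μ = 1 := by
    have : π Set.univ = 1 := measure_univ
    rwa [hπ, withDensity_apply _ MeasurableSet.univ, setLIntegral_univ] at this
  have hfint : Integrable f μ := by
    have := integrable_toReal_of_lintegral_ne_top hfm.ennreal_ofReal.aemeasurable
      (by rw [hlintf]; exact ENNReal.one_ne_top)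
    exact this.congr (Filter.Eventually.of_forall fun a => ENNReal.toReal_ofReal (hf0 a))
  have hintf1 : ∫ a, f a ∂μ = 1 := by
    have : ENNReal.ofReal (∫ a, f a ∂μ) = 1 := by
      rw [ofReal_integral_eq_lintegral_ofReal hfint (Filter.Eventually.of_forall hf0), hlintf]
    have h2 := congrArg ENNReal.toReal this
    simpa [ENNReal.toReal_ofReal (integral_nonneg hf0)] using h2
  -- the remainder measure
  set r : A → ℝ := fun a => (f a - q * h a) / (1 - q) with hr
  have hrm : Measurable r := ((hfm.sub (hmeash.const_mul q)).div_const _)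
  have hr0 : ∀ a, 0 ≤ r a := fun a => div_nonneg (sub_nonneg.2 (hqh a)) (by linarith)
  have hrint : Integrable r μ := ((hfint.sub (hinth.const_mul q)).div_const _)
  have hrint1 : ∫ a, r a ∂μ = 1 := by
    rw [hr]
    rw [integral_div, integral_sub hfint (hinth.const_mul q), integral_const_mul, hintf1, hinth1]
    rw [mul_one]
    exact div_self (by linarith)
  set πbar : Measure A := μ.withDensity fun a => ENNReal.ofReal (r a) with hπbar
  haveI hprobbar : IsProbabilityMeasure πbar := by
    constructor
    rw [hπbar, withDensity_apply _ MeasurableSet.univ, setLIntegral_univ,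
      ← ofReal_integral_eq_lintegral_ofReal hrint (Filter.Eventually.of_forall hr0),
      hrint1, ENNReal.ofReal_one]
  -- mixture identity
  have hmix : π = ENNReal.ofReal q • πθ' + ENNReal.ofReal (1 - q) • πbar := by
    have h1q : (1:ℝ) - q ≠ 0 := by linarith
    have key : (fun a => ENNReal.ofReal (f a))
        = fun a => ENNReal.ofReal q * ENNReal.ofReal (h a)
            + ENNReal.ofReal (1 - q) * ENNReal.ofReal (r a) := by
      funext a
      rw [← ENNReal.ofReal_mul hqpos.le, ← ENNReal.ofReal_mul (by linarith : (0:ℝ) ≤ 1 - q),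
        ← ENNReal.ofReal_add (mul_nonneg hqpos.le (hh0 a))
          (mul_nonneg (by linarith) (hr0 a))]
      congr 1
      simp only [hr]
      field_simp
      ring
    calc π = μ.withDensity fun a => ENNReal.ofReal q * ENNReal.ofReal (h a)
            + ENNReal.ofReal (1 - q) * ENNReal.ofReal (r a) := by rw [hπ, key]
      _ = (μ.withDensity fun a => ENNReal.ofReal q * ENNReal.ofReal (h a))
            + μ.withDensity fun a => ENNReal.ofReal (1 - q) * ENNReal.ofReal (r a) :=
          withDensity_add_left (hmeash.ennreal_ofReal.const_mul _) _
      _ = ENNReal.ofReal q • πθ' + ENNReal.ofReal (1 - q) • πbar := by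
          rw [hπθ', hπbar]
          exact congrArg₂ (· + ·) (withDensity_smul _ hmeash.ennreal_ofReal)
            (withDensity_smul _ hrm.ennreal_ofReal)
  refine ⟨hqpos, hq1.le, πbar, hprobbar, hmix, ?_⟩
  intro v hv
  set X : A → ℝ := fun a => ⟪v, g a⟫ with hX
  have hXm : Measurable X := measurable_const.inner hgm
  have hXb : ∀ a, |X a| ≤ 1 := by
    intro a
    calc |X a| ≤ ‖v‖ * ‖g a‖ := abs_real_inner_le_norm v (g a)
      _ ≤ 1 := by rw [hv, one_mul]; exact hgb a
  have hmemLp : ∀ (ν : Measure A), IsProbabilityMeasure ν → MemLp X 2 ν := by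
    intro ν hν
    exact (memLp_top_of_bound hXm.aestronglyMeasurable 1
      (Filter.Eventually.of_forall fun a => by simpa using hXb a)).mono_exponent le_top
  set m : ℝ := ∫ a, X a ∂π with hm
  have hFb : ∀ a, ‖(X a - m)^2‖ ≤ (1 + |m|)^2 := by
    intro a
    rw [Real.norm_eq_abs, abs_of_nonneg (sq_nonneg _)]
    have h1 : |X a - m| ≤ 1 + |m| := (abs_sub _ _).trans (by linarith [hXb a])
    calc (X a - m)^2 = |X a - m|^2 := (sq_abs _).symm
      _ ≤ (1 + |m|)^2 := by nlinarith [abs_nonneg (X a - m)]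
  have hFint : ∀ (ν : Measure A), IsFiniteMeasure ν → Integrable (fun a => (X a - m)^2) ν := by
    intro ν hν
    exact ((memLp_top_of_bound ((hXm.sub measurable_const).pow_const 2).aestronglyMeasurable
      _ (Filter.Eventually.of_forall hFb)).mono_exponent le_top).integrable le_rfl
  haveI hfin1 : IsFiniteMeasure (ENNReal.ofReal q • πθ') := by
    constructor
    rw [Measure.smul_apply, smul_eq_mul, measure_univ, mul_one]
    exact ENNReal.ofReal_lt_top
  haveI hfin2 : IsFiniteMeasure (ENNReal.ofReal (1 - q) • πbar) := by
    constructor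
    rw [Measure.smul_apply, smul_eq_mul, measure_univ, mul_one]
    exact ENNReal.ofReal_lt_top
  have hvar : variance X π = ∫ a, (X a - m)^2 ∂π := by
    rw [variance_eq_integral hXm.aemeasurable]
  have hsplit : ∫ a, (X a - m)^2 ∂π
      = q * ∫ a, (X a - m)^2 ∂πθ' + (1 - q) * ∫ a, (X a - m)^2 ∂πbar := by
    rw [hmix] at *
    rw [integral_add_measure (hFint _ hfin1) (hFint _ hfin2),
      integral_smul_measure, integral_smul_measure,
      ENNReal.toReal_ofReal hqpos.le, ENNReal.toReal_ofReal (by linarith : (0:ℝ) ≤ 1 - q)]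
    simp [smul_eq_mul]
  have hvarθ : variance X πθ' ≤ ∫ a, (X a - m)^2 ∂πθ' :=
    aux_var_le πθ' X (hmemLp πθ' hprobθ) m
  have hbar0 : 0 ≤ ∫ a, (X a - m)^2 ∂πbar := integral_nonneg fun a => sq_nonneg _
  calc q * variance X πθ' ≤ q * ∫ a, (X a - m)^2 ∂πθ' :=
        mul_le_mul_of_nonneg_left hvarθ hqpos.le
    _ ≤ q * ∫ a, (X a - m)^2 ∂πθ' + (1 - q) * ∫ a, (X a - m)^2 ∂πbar := by
        nlinarith
    _ = variance X π := by rw [hvar, hsplit]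
end

section
/- With f and Z_β as in the hat-function example (f piecewise linear equal to 6a−1 on [0,1/3], 1 on [1/3,2/3], 5−6a on [2/3,1]; Z_β = ∫₀¹ e^{βf}), define the Gibbs measure π_β with density e^{βf}/Z_β with respect to Lebesgue measure on [0,1]. Then KL(π_β | μ) = β·(N_β/Z_β) − log Z_β where N_β = ∫₀¹ f·e^{βf} da = (e^β/3)·(1 + 1/β − 1/β² + e^{−2β}(1/β + 1/β²)), and lim_{β→∞} KL(π_β | μ) = log 3. -/
open MeasureTheory Filter

/-- The piecewise-linear hat-function combination `f_θ` for `θ = (−1,1,1,−1)` on the grid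
`{0, 1/3, 2/3, 1}`. -/
noncomputable def hatf (a : ℝ) : ℝ :=
  if a ≤ 1 / 3 then 6 * a - 1 else if a ≤ 2 / 3 then 1 else 5 - 6 * a

/-- Normalizing constant `Z_β = ∫₀¹ e^{β f}`. -/
noncomputable def Zhat (β : ℝ) : ℝ := ∫ a in (0 : ℝ)..1, Real.exp (β * hatf a)

/-- Numerator `N_β = ∫₀¹ f e^{β f}`. -/
noncomputable def Nhat (β : ℝ) : ℝ := ∫ a in (0 : ℝ)..1, hatf a * Real.exp (β * hatf a)

/-- KL divergence of the Gibbs measure `π_β` (density `e^{βf}/Z_β`) from Lebesgue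
measure on `[0,1]`. -/
noncomputable def KLhat (β : ℝ) : ℝ :=
  ∫ a in (0 : ℝ)..1,
    Real.exp (β * hatf a) / Zhat β * Real.log (Real.exp (β * hatf a) / Zhat β)

lemma hatf_cont : Continuous hatf := by
  unfold hatf
  apply Continuous.if_le
  · fun_prop
  · apply Continuous.if_le
    · fun_prop
    · fun_prop
    · fun_prop
    · fun_prop
    · intro a ha; norm_num [ha]
  · fun_prop
  · fun_prop
  · intro a ha; norm_num [ha]

-- generic antiderivative lemma
lemma int_lin_exp (β c d p q : ℝ) (hβ : β ≠ 0) (hc : c ≠ 0) :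
    ∫ a in p..q, (c * a + d) * Real.exp (β * (c * a + d)) =
      (((c*q+d)/β - 1/β^2) * Real.exp (β*(c*q+d))
        - ((c*p+d)/β - 1/β^2) * Real.exp (β*(c*p+d))) / c := by
  have key : ∀ a : ℝ, HasDerivAt (fun a => ((c*a+d)/β - 1/β^2) * Real.exp (β*(c*a+d)) / c)
      ((c * a + d) * Real.exp (β * (c * a + d))) a := by
    intro a
    have h1 : HasDerivAt (fun a : ℝ => c * a + d) c a := by
      simpa using ((hasDerivAt_id a).const_mul c).add_const d
    have h2 : HasDerivAt (fun a : ℝ => β * (c * a + d)) (β * c) a := h1.const_mul β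
    have h3 := h2.exp
    have h4 : HasDerivAt (fun a : ℝ => (c*a+d)/β - 1/β^2) (c/β) a := by
      exact (h1.div_const β).sub_const (1/β^2)
    have : HasDerivAt (fun a => ((c*a+d)/β - 1/β^2) * Real.exp (β*(c*a+d)) / c)
        ((c / β * Real.exp (β * (c * a + d)) + ((c * a + d) / β - 1 / β ^ 2) *
          (Real.exp (β * (c * a + d)) * (β * c))) / c) a := (h4.mul h3).div_const c
    convert this using 1
    field_simp
    ring
  rw [intervalIntegral.integral_eq_sub_of_hasDerivAt (fun a _ => key a) ?_]
  · ring
  · apply Continuous.intervalIntegrable; fun_prop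

lemma int_exp (β c d p q : ℝ) (hβ : β ≠ 0) (hc : c ≠ 0) :
    ∫ a in p..q, Real.exp (β * (c * a + d)) =
      (Real.exp (β*(c*q+d)) - Real.exp (β*(c*p+d))) / (β * c) := by
  have key : ∀ a : ℝ, HasDerivAt (fun a => Real.exp (β*(c*a+d)) / (β*c))
      (Real.exp (β * (c * a + d))) a := by
    intro a
    have h1 : HasDerivAt (fun a : ℝ => c * a + d) c a := by
      simpa using ((hasDerivAt_id a).const_mul c).add_const d
    have h2 : HasDerivAt (fun a : ℝ => β * (c * a + d)) (β * c) a := h1.const_mul β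
    have : HasDerivAt (fun a => Real.exp (β*(c*a+d)) / (β*c))
        (Real.exp (β * (c * a + d)) * (β * c) / (β * c)) a := h2.exp.div_const (β * c)
    convert this using 1
    field_simp
  rw [intervalIntegral.integral_eq_sub_of_hasDerivAt (fun a _ => key a) ?_]
  · ring
  · apply Continuous.intervalIntegrable; fun_prop


lemma contZ (β : ℝ) : Continuous (fun a => Real.exp (β * hatf a)) :=
  Real.continuous_exp.comp (continuous_const.mul hatf_cont)

lemma contN (β : ℝ) : Continuous (fun a => hatf a * Real.exp (β * hatf a)) :=
  hatf_cont.mul (contZ β)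

lemma exp_m2 (β : ℝ) : Real.exp (-2*β) = Real.exp (-β) * Real.exp (-β) := by
  rw [← Real.exp_add]; ring_nf

lemma Zhat_eq (β : ℝ) (hβ : 0 < β) :
    Zhat β = Real.exp β / 3 * (1 + 1/β - Real.exp (-2*β) * (1/β)) := by
  unfold Zhat
  rw [← intervalIntegral.integral_add_adjacent_intervals (b := 2/3)
        ((contZ β).intervalIntegrable _ _) ((contZ β).intervalIntegrable _ _),
      ← intervalIntegral.integral_add_adjacent_intervals (b := 1/3)
        ((contZ β).intervalIntegrable _ _) ((contZ β).intervalIntegrable _ _)]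
  have e1 : ∫ a in (0:ℝ)..(1/3), Real.exp (β * hatf a)
      = ∫ a in (0:ℝ)..(1/3), Real.exp (β * (6*a + (-1))) := by
    apply intervalIntegral.integral_congr
    intro a ha
    rw [Set.uIcc_of_le (by norm_num)] at ha
    simp only [hatf, if_pos ha.2]
    ring_nf
  have e2 : ∫ a in (1/3:ℝ)..(2/3), Real.exp (β * hatf a)
      = ∫ a in (1/3:ℝ)..(2/3), Real.exp (β * 1) := by
    apply intervalIntegral.integral_congr
    intro a ha
    rw [Set.uIcc_of_le (by norm_num)] at ha
    have h1 : hatf a = 1 := by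
      simp only [hatf]
      split_ifs with hc hd
      · have : a = 1/3 := le_antisymm hc ha.1
        rw [this]; norm_num
      · rfl
      · exact absurd ha.2 hd
    simp only [h1]
  have e3 : ∫ a in (2/3:ℝ)..1, Real.exp (β * hatf a)
      = ∫ a in (2/3:ℝ)..1, Real.exp (β * (-6*a + 5)) := by
    apply intervalIntegral.integral_congr
    intro a ha
    rw [Set.uIcc_of_le (by norm_num)] at ha
    have h1 : hatf a = -6*a + 5 := by
      simp only [hatf]
      split_ifs with hc hd
      · linarith [ha.1]
      · have : a = 2/3 := le_antisymm hd ha.1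
        rw [this]; norm_num
      · ring
    simp only [h1]
  rw [e1, e2, e3, int_exp β 6 (-1) 0 (1/3) hβ.ne' (by norm_num),
    int_exp β (-6) 5 (2/3) 1 hβ.ne' (by norm_num),
    intervalIntegral.integral_const]
  have hb : Real.exp (-β) = (Real.exp β)⁻¹ := Real.exp_neg β
  rw [exp_m2]
  norm_num [hb]
  field_simp
  ring

lemma Nhat_eq (β : ℝ) (hβ : 0 < β) :
    Nhat β = Real.exp β / 3 *
      (1 + 1 / β - 1 / β ^ 2 + Real.exp (-2 * β) * (1 / β + 1 / β ^ 2)) := by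
  unfold Nhat
  rw [← intervalIntegral.integral_add_adjacent_intervals (b := 2/3)
        ((contN β).intervalIntegrable _ _) ((contN β).intervalIntegrable _ _),
      ← intervalIntegral.integral_add_adjacent_intervals (b := 1/3)
        ((contN β).intervalIntegrable _ _) ((contN β).intervalIntegrable _ _)]
  have e1 : ∫ a in (0:ℝ)..(1/3), hatf a * Real.exp (β * hatf a)
      = ∫ a in (0:ℝ)..(1/3), (6*a + (-1)) * Real.exp (β * (6*a + (-1))) := by
    apply intervalIntegral.integral_congr
    intro a ha
    rw [Set.uIcc_of_le (by norm_num)] at ha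
    simp only [hatf, if_pos ha.2]
    ring_nf
  have e2 : ∫ a in (1/3:ℝ)..(2/3), hatf a * Real.exp (β * hatf a)
      = ∫ a in (1/3:ℝ)..(2/3), Real.exp (β * 1) := by
    apply intervalIntegral.integral_congr
    intro a ha
    rw [Set.uIcc_of_le (by norm_num)] at ha
    have h1 : hatf a = 1 := by
      simp only [hatf]
      split_ifs with hc hd
      · have : a = 1/3 := le_antisymm hc ha.1
        rw [this]; norm_num
      · rfl
      · exact absurd ha.2 hd
    simp only [h1, one_mul]
  have e3 : ∫ a in (2/3:ℝ)..1, hatf a * Real.exp (β * hatf a)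
      = ∫ a in (2/3:ℝ)..1, (-6*a + 5) * Real.exp (β * (-6*a + 5)) := by
    apply intervalIntegral.integral_congr
    intro a ha
    rw [Set.uIcc_of_le (by norm_num)] at ha
    have h1 : hatf a = -6*a + 5 := by
      simp only [hatf]
      split_ifs with hc hd
      · linarith [ha.1]
      · have : a = 2/3 := le_antisymm hd ha.1
        rw [this]; norm_num
      · ring
    simp only [h1]
  rw [e1, e2, e3, int_lin_exp β 6 (-1) 0 (1/3) hβ.ne' (by norm_num),
    int_lin_exp β (-6) 5 (2/3) 1 hβ.ne' (by norm_num),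
    intervalIntegral.integral_const]
  have hb : Real.exp (-β) = (Real.exp β)⁻¹ := Real.exp_neg β
  rw [exp_m2]
  norm_num [hb]
  field_simp
  ring

lemma wpos (β : ℝ) (hβ : 0 < β) : 0 < 1 + 1/β - Real.exp (-2*β) * (1/β) := by
  have h1 : Real.exp (-2*β) < 1 := Real.exp_lt_one_iff.mpr (by linarith)
  have h2 : (0:ℝ) < 1/β := by positivity
  have h3 : 0 < Real.exp (-2*β) := Real.exp_pos _
  nlinarith

lemma Zhat_pos (β : ℝ) (hβ : 0 < β) : 0 < Zhat β := by
  rw [Zhat_eq β hβ]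
  have := wpos β hβ
  positivity

lemma KL_eq (β : ℝ) (hβ : 0 < β) :
    KLhat β = β * (Nhat β / Zhat β) - Real.log (Zhat β) := by
  have hZ := Zhat_pos β hβ
  unfold KLhat
  have congrstep : Set.EqOn
      (fun a => Real.exp (β * hatf a) / Zhat β * Real.log (Real.exp (β * hatf a) / Zhat β))
      (fun a => (β / Zhat β) * (hatf a * Real.exp (β * hatf a))
        - (Real.log (Zhat β) / Zhat β) * Real.exp (β * hatf a)) (Set.uIcc 0 1) := by
    intro a _
    simp only
    rw [Real.log_div (Real.exp_ne_zero _) hZ.ne', Real.log_exp]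
    field_simp
  rw [intervalIntegral.integral_congr congrstep,
    intervalIntegral.integral_sub
      (((contN β).intervalIntegrable _ _).const_mul _)
      (((contZ β).intervalIntegrable _ _).const_mul _),
    intervalIntegral.integral_const_mul, intervalIntegral.integral_const_mul]
  show β / Zhat β * Nhat β - Real.log (Zhat β) / Zhat β * Zhat β = _
  field_simp

lemma KL_explicit (β : ℝ) (hβ : 0 < β) :
    KLhat β = (-(1/β) + Real.exp (-2*β) * (2 + 1/β)) / (1 + 1/β - Real.exp (-2*β) * (1/β))
      + Real.log 3 - Real.log (1 + 1/β - Real.exp (-2*β) * (1/β)) := by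
  have hw := wpos β hβ
  have hE : (0:ℝ) < Real.exp β := Real.exp_pos β
  rw [KL_eq β hβ, Nhat_eq β hβ, Zhat_eq β hβ]
  set u := Real.exp (-2*β) with hu
  set w := 1 + 1/β - u * (1/β) with hwdef
  have hlog : Real.log (Real.exp β / 3 * w) = β - Real.log 3 + Real.log w := by
    rw [Real.log_mul (by positivity) hw.ne', Real.log_div hE.ne' (by norm_num),
      Real.log_exp]
  rw [hlog]
  have hfrac : Real.exp β / 3 * (1 + 1/β - 1/β^2 + u * (1/β + 1/β^2)) / (Real.exp β / 3 * w)
      = (1 + 1/β - 1/β^2 + u * (1/β + 1/β^2)) / w := by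
    rw [mul_div_mul_left _ _ (by positivity)]
  rw [hfrac]
  have key : β * ((1 + 1/β - 1/β^2 + u * (1/β + 1/β^2)) / w) - β
      = (-(1/β) + u * (2 + 1/β)) / w := by
    rw [eq_div_iff hw.ne', sub_mul, mul_assoc, div_mul_cancel₀ _ hw.ne', hwdef]
    field_simp
    ring
  linarith [key]

lemma KL_tendsto : Tendsto KLhat atTop (nhds (Real.log 3)) := by
  have h1 : Tendsto (fun β : ℝ => 1/β) atTop (nhds 0) := by
    simpa using tendsto_inv_atTop_zero
  have h2 : Tendsto (fun β : ℝ => Real.exp (-2*β)) atTop (nhds 0) := by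
    have hm : Tendsto (fun β : ℝ => 2*β) atTop atTop :=
      Tendsto.const_mul_atTop two_pos tendsto_id
    have := Real.tendsto_exp_neg_atTop_nhds_zero.comp hm
    simpa only [Function.comp_def, neg_mul] using this
  have hden : Tendsto (fun β : ℝ => 1 + 1/β - Real.exp (-2*β) * (1/β)) atTop (nhds 1) := by
    have := (tendsto_const_nhds (x := (1:ℝ)).add h1).sub (h2.mul h1)
    simpa using this
  have hnum : Tendsto (fun β : ℝ => -(1/β) + Real.exp (-2*β) * (2 + 1/β)) atTop (nhds 0) := by
    have := (h1.neg).add (h2.mul ((tendsto_const_nhds (x := (2:ℝ))).add h1))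
    simpa using this
  have hdiv := hnum.div hden one_ne_zero
  have hlog : Tendsto (fun β : ℝ => Real.log (1 + 1/β - Real.exp (-2*β) * (1/β)))
      atTop (nhds 0) := by
    have := (Real.continuousAt_log one_ne_zero).tendsto.comp hden
    simpa [Function.comp_def] using this
  have hfinal := (hdiv.add (tendsto_const_nhds (x := Real.log 3))).sub hlog
  rw [show (0:ℝ)/1 + Real.log 3 - 0 = Real.log 3 by norm_num] at hfinal
  apply Tendsto.congr' _ hfinal
  filter_upwards [eventually_gt_atTop 0] with β hβ
  exact (KL_explicit β hβ).symm

/-- In the hat-function example the KL divergence equals `β N_β/Z_β − log Z_β`, with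
`N_β = (e^β/3)(1 + 1/β − 1/β² + e^{−2β}(1/β + 1/β²))`, and it converges to `log 3`
as `β → ∞` (so the KL divergence is not radially unbounded). -/
theorem hat_kl_limit :
    (∀ β : ℝ, 0 < β →
        KLhat β = β * (Nhat β / Zhat β) - Real.log (Zhat β) ∧
        Nhat β = Real.exp β / 3 *
          (1 + 1 / β - 1 / β ^ 2 + Real.exp (-2 * β) * (1 / β + 1 / β ^ 2))) ∧
      Tendsto KLhat atTop (nhds (Real.log 3)) := by
  exact ⟨fun β hβ => ⟨KL_eq β hβ, Nhat_eq β hβ⟩, KL_tendsto⟩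
end
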